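/- Let μ : Fin N → ℕ be a natural multiset of m-cardinality r = Σ_i μ(i) ≥ 1 and let A be its normalized hypermatrix representation. Then for every index j : Fin N, the sum of the entries of A over all tuples whose first coordinate is j equals the multiplicity of j, i.e. Σ_{t : t(0) = j} A(t) = μ(j). -/

import Mathlib

open Finset

private def myfib {N n : ℕ} (t : Fin n → Fin N) (i : Fin N) : ℕ :=
  (Finset.univ.filter (fun s => t s = i)).card

private def Tset (N n : ℕ) (μ : Fin N → ℕ) : Finset (Fin n → Fin N) :=
  Finset.univ.filter (fun t => ∀ i, myfib t i = μ i)

private lemma myfib_succ {N n : ℕ} (t : Fin (n + 1) → Fin N) (i : Fin N) :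
    myfib t i = myfib (t ∘ Fin.succ) i + (if t 0 = i then 1 else 0) := by
  simp only [myfib, Finset.card_filter, Fin.sum_univ_succ, Function.comp]
  ring

private lemma claimA {N n : ℕ} (μ : Fin N → ℕ) (j : Fin N) (hj : 1 ≤ μ j) :
    ((Tset N (n + 1) μ).filter (fun t => t 0 = j)).card
      = (Tset N n (Function.update μ j (μ j - 1))).card := by
  apply Finset.card_nbij' (i := fun t => t ∘ Fin.succ) (j := fun t' => Fin.cases j t')
  · intro t ht
    simp only [Tset, Finset.mem_coe, Finset.mem_filter, Finset.mem_univ, true_and] at ht ⊢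
    obtain ⟨hreal, h0⟩ := ht
    intro i
    have h := myfib_succ t i
    rw [hreal i, h0] at h
    rcases eq_or_ne i j with rfl | hij
    · rw [if_pos rfl] at h
      rw [Function.update_self]
      omega
    · rw [if_neg (Ne.symm hij)] at h
      rw [Function.update_of_ne hij]
      omega
  · intro t' ht'
    simp only [Tset, Finset.mem_coe, Finset.mem_filter, Finset.mem_univ, true_and] at ht' ⊢
    constructor
    · intro i
      have h := myfib_succ (Fin.cases j t' : Fin (n+1) → Fin N) i
      have hc : ((Fin.cases j t' : Fin (n+1) → Fin N) ∘ Fin.succ) = t' := by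
        funext s; simp
      rw [hc, ht' i, Fin.cases_zero] at h
      rcases eq_or_ne i j with rfl | hij
      · rw [Function.update_self, if_pos rfl] at h
        omega
      · rw [Function.update_of_ne hij, if_neg (Ne.symm hij)] at h
        omega
    · simp
  · intro t ht
    simp only [Tset, Finset.mem_coe, Finset.mem_filter] at ht
    funext s
    induction s using Fin.cases with
    | zero => simp [ht.2]
    | succ s => simp
  · intro t' _
    funext s; simp

-- the fiber with first coordinate `j`
private lemma claimC {N n : ℕ} (μ : Fin N → ℕ) (hμ : ∑ i, μ i = n + 1) (j : Fin N)
    (key : ∀ μ' : Fin N → ℕ, (∑ i, μ' i = n) →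
      (Tset N n μ').card * ∏ i, (μ' i).factorial = n.factorial) :
    ((Tset N (n + 1) μ).filter (fun t => t 0 = j)).card
      * ∏ i, (μ i).factorial = μ j * n.factorial := by
  rcases Nat.eq_zero_or_pos (μ j) with hj | hj
  · have hempty : (Tset N (n + 1) μ).filter (fun t => t 0 = j) = ∅ := by
      ext t
      simp only [Finset.mem_filter, Tset, Finset.mem_univ, true_and, Finset.notMem_empty,
        iff_false, not_and]
      intro hreal ht0
      have hmem : (0 : Fin (n+1)) ∈ Finset.univ.filter (fun s => t s = j) := by simp [ht0]
      have hpos : 0 < myfib t j := Finset.card_pos.mpr ⟨0, hmem⟩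
      rw [hreal j, hj] at hpos
      exact absurd hpos (lt_irrefl 0)
    rw [hempty, hj]
    simp
  · set μ' := Function.update μ j (μ j - 1) with hμ'
    have hsum' : ∑ i, μ' i = n := by
      rw [hμ', Finset.sum_update_of_mem (Finset.mem_univ j)]
      have h1 := Finset.sum_eq_sum_sdiff_singleton_add (Finset.mem_univ j) μ
      omega
    have hprod : ∏ i, (μ i).factorial = μ j * ∏ i, (μ' i).factorial := by
      rw [Finset.prod_eq_mul_prod_sdiff_singleton_of_mem (Finset.mem_univ j) (fun i => (μ i).factorial),
        Finset.prod_eq_mul_prod_sdiff_singleton_of_mem (Finset.mem_univ j) (fun i => (μ' i).factorial)]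
      have h1 : ∏ i ∈ Finset.univ \ {j}, (μ' i).factorial
          = ∏ i ∈ Finset.univ \ {j}, (μ i).factorial := by
        apply Finset.prod_congr rfl
        intro i hi
        simp only [Finset.mem_sdiff, Finset.mem_singleton] at hi
        rw [hμ', Function.update_of_ne hi.2]
      rw [h1]
      have h2 : (μ j).factorial = μ j * (μ' j).factorial := by
        rw [hμ', Function.update_self]
        conv_lhs => rw [show μ j = (μ j - 1) + 1 by omega]
        rw [Nat.factorial_succ]
        congr 1
        omega
      rw [h2]; ring
    rw [claimA μ j hj, hprod, ← mul_assoc,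
      mul_comm ((Tset N n μ').card) (μ j), mul_assoc, key μ' hsum']

private lemma claimB {N : ℕ} : ∀ (n : ℕ) (μ : Fin N → ℕ), (∑ i, μ i = n) →
    (Tset N n μ).card * ∏ i, (μ i).factorial = n.factorial := by
  intro n
  induction n with
  | zero =>
    intro μ hμ
    have hz : ∀ i, μ i = 0 := fun i => Finset.sum_eq_zero_iff.mp hμ i (Finset.mem_univ i)
    have huniv : Tset N 0 μ = Finset.univ := by
      apply Finset.eq_univ_of_forall
      intro t
      simp only [Tset, Finset.mem_filter, Finset.mem_univ, true_and]
      intro i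
      rw [hz i]
      simp [myfib]
    rw [huniv]
    simp [hz, Finset.card_univ]
  | succ n ih =>
    intro μ hμ
    have hcard : (Tset N (n + 1) μ).card
        = ∑ j, ((Tset N (n + 1) μ).filter (fun t => t 0 = j)).card := by
      exact Finset.card_eq_sum_card_fiberwise (f := fun t : Fin (n+1) → Fin N => t 0) (fun x _ => Finset.mem_univ _)
    rw [hcard, Finset.sum_mul]
    rw [Finset.sum_congr rfl (fun j _ => claimC μ hμ j ih), ← Finset.sum_mul, hμ,
      Nat.factorial_succ]

/-- For the normalized hypermatrix representation `A` of a natural multiset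
`μ : Fin N → ℕ` of m-cardinality `r = Σ_i μ(i) ≥ 1`, for every index `j : Fin N`
the sum of the entries of `A` over all tuples whose first coordinate is `j`
equals the multiplicity `μ j`. -/
theorem stmt5 (N r : ℕ) (hr : 1 ≤ r) (μ : Fin N → ℕ) (hμ : ∑ i, μ i = r) (j : Fin N) :
    ∑ t ∈ Finset.univ.filter (fun t : Fin r → Fin N => t ⟨0, hr⟩ = j),
        (if ∀ i, (Finset.univ.filter (fun s => t s = i)).card = μ i
         then ((∏ i, (μ i).factorial : ℕ) : ℝ) / (r - 1).factorial
         else 0) = μ j := by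
  obtain ⟨n, rfl⟩ : ∃ n, r = n + 1 := ⟨r - 1, by omega⟩
  have h0 : (⟨0, hr⟩ : Fin (n + 1)) = 0 := rfl
  rw [h0, ← Finset.sum_filter, Finset.sum_const]
  have hset : (Finset.univ.filter (fun t : Fin (n+1) → Fin N => t 0 = j)).filter
      (fun t => ∀ i, (Finset.univ.filter (fun s => t s = i)).card = μ i)
      = (Tset N (n + 1) μ).filter (fun t => t 0 = j) := by
    rw [Finset.filter_comm]
    rfl
  rw [hset]
  have key := claimC μ hμ j (claimB n)
  have hn1 : ((n + 1 : ℕ) - 1) = n := rfl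
  rw [hn1, nsmul_eq_mul]
  have hfac : (n.factorial : ℝ) ≠ 0 := Nat.cast_ne_zero.mpr (Nat.factorial_ne_zero n)
  rw [mul_div_assoc', div_eq_iff hfac]
  exact_mod_cast key
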